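/- Let M : ℝ³ → M₃(ℝ) be a continuously differentiable matrix field. Then the row-wise divergence of 𝒮(M) satisfies div(𝒮 M) = 2 vskw(curl M); in components, Σ_j ∂_j (M_{ji} − (tr M) δ_{ij}) = 2 (vskw(curl M))_i for each i, where curl is the row-wise curl. -/

import Mathlib

open Matrix MeasureTheory

noncomputable section

abbrev V3 := Fin 3 → ℝ
abbrev M3 := Matrix (Fin 3) (Fin 3) ℝ

/-- The Levi-Civita symbol in three dimensions. -/
def eps (i j k : Fin 3) : ℝ :=
  (((i : ℕ) : ℝ) - ((j : ℕ) : ℝ)) * (((j : ℕ) : ℝ) - ((k : ℕ) : ℝ)) *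
    (((k : ℕ) : ℝ) - ((i : ℕ) : ℝ)) / 2

/-- Partial derivative `∂ₘ f (x)`. -/
def pd (m : Fin 3) (f : V3 → ℝ) (x : V3) : ℝ := fderiv ℝ f x (Pi.single m 1)

/-- Jacobian matrix `(grad u)_{ij} = ∂_j u_i`. -/
def gradV (u : V3 → V3) (x : V3) : M3 := Matrix.of fun i j => pd j (fun y => u y i) x

/-- Divergence of a vector field. -/
def divV (u : V3 → V3) (x : V3) : ℝ := ∑ i, pd i (fun y => u y i) x

/-- Curl of a vector field: `(curl u)_k = Σ_{m,j} ε_{kmj} ∂_m u_j`. -/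
def curlV (u : V3 → V3) (x : V3) : V3 := fun k => ∑ m, ∑ j, eps k m j * pd m (fun y => u y j) x

/-- Row-wise curl of a matrix field: `(curl A)_{ik} = Σ_{m,j} ε_{kmj} ∂_m A_{ij}`. -/
def curlM (A : V3 → M3) (x : V3) : M3 :=
  Matrix.of fun i k => ∑ m, ∑ j, eps k m j * pd m (fun y => A y i j) x

/-- Row-wise divergence of a matrix field: `(div A)_i = Σ_j ∂_j A_{ij}`. -/
def divM (A : V3 → M3) (x : V3) : V3 := fun i => ∑ j, pd j (fun y => A y i j) x

/-- Symmetric part of a matrix. -/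
def symM (M : M3) : M3 := (2⁻¹ : ℝ) • (M + Mᵀ)

/-- Skew-symmetric part of a matrix. -/
def skwM (M : M3) : M3 := (2⁻¹ : ℝ) • (M - Mᵀ)

/-- Linearized deformation `def u = sym grad u`. -/
def defV (u : V3 → V3) (x : V3) : M3 := symM (gradV u x)

/-- `(mskw v)_{ij} = Σ_k ε_{ikj} v_k`, so that `(mskw v) w = v × w`. -/
def mskw (v : V3) : M3 := Matrix.of fun i j => ∑ k, eps i k j * v k

/-- `vskw = mskw⁻¹ ∘ skw`. -/
def vskw (M : M3) : V3 := fun l => 2⁻¹ * ∑ i, ∑ j, eps i l j * skwM M i j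

/-- Frobenius pairing `A : B = Σ_{i,j} A_{ij} B_{ij}`. -/
def frob (A B : M3) : ℝ := ∑ i, ∑ j, A i j * B i j

/-- Outer product `(a ⊗ b)_{ij} = a_i b_j`. -/
def outer (a b : V3) : M3 := Matrix.of fun i j => a i * b j

/-- Row-wise cross product of a matrix with a vector:
`(M × n)_{ij} = Σ_{k,m} ε_{jkm} M_{ik} n_m`. -/
def mcross (M : M3) (n : V3) : M3 :=
  Matrix.of fun i j => ∑ k, ∑ m, eps j k m * M i k * n m

/-- `𝒮(M) = Mᵀ − tr(M) I`. -/
def Sop (M : M3) : M3 := Mᵀ - Matrix.trace M • (1 : M3)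

/-- Incompatibility operator `inc σ = curl ((curl σ)ᵀ)` (row-wise curl). -/
def incM (σ : V3 → M3) (x : V3) : M3 := curlM (fun y => (curlM σ y)ᵀ) x


lemma pd_sub' {f g : V3 → ℝ} {x : V3} (m : Fin 3)
    (hf : DifferentiableAt ℝ f x) (hg : DifferentiableAt ℝ g x) :
    pd m (fun y => f y - g y) x = pd m f x - pd m g x := by
  simp [pd, fderiv_fun_sub hf hg]

lemma pd_add' {f g : V3 → ℝ} {x : V3} (m : Fin 3)
    (hf : DifferentiableAt ℝ f x) (hg : DifferentiableAt ℝ g x) :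
    pd m (fun y => f y + g y) x = pd m f x + pd m g x := by
  simp [pd, fderiv_fun_add hf hg]

/-- The anticommutativity identity `dS = −Sd` at index 2:
`div(𝒮 M) = 2 vskw(curl M)` for a `C¹` matrix field `M` (row-wise div and curl). -/
theorem div_Sop (M : V3 → M3) (hM : ∀ i j, ContDiff ℝ 1 fun y => M y i j) :
    ∀ x, divM (fun y => Sop (M y)) x = (2 : ℝ) • vskw (curlM M x) := by
  intro x
  have hd : ∀ i j : Fin 3, DifferentiableAt ℝ (fun y => M y i j) x :=
    fun i j => ((hM i j).differentiable one_ne_zero).differentiableAt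
  funext l
  have e2 : ∀ i m j : Fin 3,
      pd m (fun y => M y i j - (M y 0 0 + M y 1 1 + M y 2 2)) x
        = pd m (fun y => M y i j) x
          - (pd m (fun y => M y 0 0) x + pd m (fun y => M y 1 1) x
              + pd m (fun y => M y 2 2) x) := by
    intro i m j
    rw [pd_sub' m (hd i j) (((hd 0 0).fun_add (hd 1 1)).fun_add (hd 2 2)),
        pd_add' m ((hd 0 0).fun_add (hd 1 1)) (hd 2 2),
        pd_add' m (hd 0 0) (hd 1 1)]
  fin_cases l <;>
  · simp only [divM, Sop, Matrix.sub_apply, Matrix.transpose_apply, Matrix.smul_apply,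
      Matrix.one_apply, Matrix.trace, Matrix.diag, smul_eq_mul, Fin.sum_univ_three,
      vskw, skwM, curlM, Matrix.of_apply, Pi.smul_apply]
    norm_num [eps, Fin.ext_iff]
    rw [e2]
    try simp only [show ((⟨2,by norm_num⟩:Fin 3)) = 2 from rfl]
    ring
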